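/- For each index i ∈ {1,…,r}, the group algebra ℤ[Λ] decomposes as the internal direct sum ℤ[Λ] = ℤ[Λ]^{⟨s_i⟩} ⊕ e^{ω_i} · ℤ[Λ]^{⟨s_i⟩} of ℤ[Λ]^{⟨s_i⟩}-submodules, where ℤ[Λ]^{⟨s_i⟩} denotes the subring of elements fixed by the simple reflection s_i. -/

import Mathlib

open scoped Classical

noncomputable section

/-- The lattice `Λ = Λ₀ ⊕ Λ_ss`, where `Λ_ss = Fin r →₀ ℤ` is the weight lattice of the
root system, with the fundamental weights `ω_1, …, ω_r` as standard basis, and `Λ₀` is a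
lattice on which the Weyl group acts trivially. -/
abbrev Lam (r : ℕ) (Λ₀ : Type) := Λ₀ × (Fin r →₀ ℤ)

/-- The fundamental weight `ω_i`, viewed in `Λ`. -/
def omega (r : ℕ) (Λ₀ : Type) [AddCommGroup Λ₀] (i : Fin r) : Lam r Λ₀ :=
  (0, Finsupp.single i 1)

/-- The group algebra `ℤ[Λ]`. -/
abbrev GA (r : ℕ) (Λ₀ : Type) [AddCommGroup Λ₀] := AddMonoidAlgebra ℤ (Lam r Λ₀)

/-- The basis element `e^λ` of the group algebra `ℤ[Λ]`. -/
def eL {r : ℕ} {Λ₀ : Type} [AddCommGroup Λ₀] (l : Lam r Λ₀) : GA r Λ₀ :=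
  AddMonoidAlgebra.single l 1

/-- The data of a reduced crystallographic root system `Φ` of rank `r`, with Weyl group `W`
(a Coxeter group on the simple reflections `s_1, …, s_r`), acting on the lattice
`Λ = Λ₀ ⊕ Λ_ss` (trivially on `Λ₀`), where `Λ_ss = Fin r →₀ ℤ` is the weight lattice with
the fundamental weights as basis.  The simple root `α_i` is recorded by its coordinates in
the basis of fundamental weights, that is, `α i j = ⟨α_i, α_j^∨⟩` is the `(j,i)` entry of
the Cartan matrix; the simple reflection acts by `s_i(λ) = λ − ⟨λ, α_i^∨⟩ α_i`. -/
structure WeylSetup (r : ℕ) (Λ₀ : Type) [AddCommGroup Λ₀] (W : Type) [Group W] where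
  /-- The Coxeter matrix of the Weyl group. -/
  M : CoxeterMatrix (Fin r)
  /-- `W` is a Coxeter group with simple reflections `s_1, …, s_r`. -/
  cs : CoxeterSystem M W
  /-- The simple roots, in fundamental-weight coordinates: `α i j = ⟨α_i, α_j^∨⟩`. -/
  α : Fin r → (Fin r →₀ ℤ)
  /-- `⟨α_i, α_i^∨⟩ = 2`. -/
  α_self : ∀ i, α i i = 2
  /-- Off-diagonal Cartan entries are nonpositive. -/
  α_off : ∀ i j, i ≠ j → α i j ≤ 0
  /-- Vanishing of Cartan entries is symmetric. -/
  α_zero_iff : ∀ i j, α i j = 0 ↔ α j i = 0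
  /-- The action of `W` on `Λ` (by automorphisms of the additive group). -/
  ρ : W →* Multiplicative (AddAut (Lam r Λ₀))
  /-- The simple reflection `s_i` acts trivially on `Λ₀` and by
  `λ ↦ λ − ⟨λ, α_i^∨⟩ α_i` on the weight lattice. -/
  ρ_simple : ∀ (i : Fin r) (x : Lam r Λ₀), Multiplicative.toAdd (ρ (cs.simple i)) x = (x.1, x.2 - x.2 i • α i)
  /-- The Weyl group acts faithfully on the weight lattice. -/
  faithful : Function.Injective ρ

namespace WeylSetup

variable {r : ℕ} {Λ₀ W : Type} [AddCommGroup Λ₀] [Group W]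

/-- The induced action of `w ∈ W` on the group algebra `ℤ[Λ]`, `e^λ ↦ e^{wλ}`. -/
def act (S : WeylSetup r Λ₀ W) (w : W) : GA r Λ₀ →+* GA r Λ₀ :=
  AddMonoidAlgebra.mapDomainRingHom ℤ (Multiplicative.toAdd (S.ρ w)).toAddMonoidHom

/-- The invariant subring `ℤ[Λ]^H` of the group algebra under a set `H` of elements of `W`
(e.g. a subgroup). -/
def inv (S : WeylSetup r Λ₀ W) (H : Set W) : Subring (GA r Λ₀) where
  carrier := {x : GA r Λ₀ | ∀ w ∈ H, S.act w x = x}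
  one_mem' := fun w _ => map_one (S.act w)
  mul_mem' := fun {x y} hx hy w hw => by rw [map_mul, hx w hw, hy w hw]
  add_mem' := fun {x y} hx hy w hw => by rw [map_add, hx w hw, hy w hw]
  zero_mem' := fun w _ => map_zero (S.act w)
  neg_mem' := fun {x} hx w hw => by rw [map_neg, hx w hw]

/-- The standard parabolic subgroup `W_I` generated by the simple reflections `s_i`, `i ∈ I`. -/
def WI (S : WeylSetup r Λ₀ W) (I : Finset (Fin r)) : Subgroup W :=
  Subgroup.closure (S.cs.simple '' (I : Set (Fin r)))

/-- The set `W^I` of minimal length coset representatives of `W_I`: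
`W^I = {w ∈ W : ℓ(w s_i) > ℓ(w) for all i ∈ I}`. -/
def Wmin (S : WeylSetup r Λ₀ W) (I : Finset (Fin r)) : Set W :=
  {w : W | ∀ i ∈ I, S.cs.length (w * S.cs.simple i) > S.cs.length w}

/-- `λ_v := Σ ω_i`, the sum over those `i` with `ℓ(s_i v) < ℓ(v)`
(equivalently, `v⁻¹ α_i < 0`). -/
def lamv (S : WeylSetup r Λ₀ W) (v : W) : Lam r Λ₀ :=
  ∑ i ∈ Finset.univ.filter (fun i : Fin r => S.cs.IsLeftDescent v i), omega r Λ₀ i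

/-- The Steinberg element `f_v^I := Σ_{μ ∈ W_I·(v⁻¹ λ_v)} e^μ ∈ ℤ[Λ]^{W_I}`, the sum over
the `W_I`-orbit of `v⁻¹ λ_v` in `Λ` (defined for `v ∈ W^I`). -/
def steinberg [Finite W] (S : WeylSetup r Λ₀ W) (I : Finset (Fin r)) (v : W) : GA r Λ₀ :=
  letI : Fintype W := Fintype.ofFinite W
  ∑ μ ∈ Finset.image (fun w : W => Multiplicative.toAdd (S.ρ w) (Multiplicative.toAdd (S.ρ v⁻¹) (S.lamv v)))
      (Finset.univ.filter (· ∈ S.WI I)), eL μ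

/-- The set `C^I := W^{Δ∖I} ∖ ⋃_{J ⊊ I} W^{Δ∖J}`. -/
def CI (S : WeylSetup r Λ₀ W) (I : Finset (Fin r)) : Set W :=
  S.Wmin Iᶜ \ ⋃ J ∈ {J : Finset (Fin r) | J ⊂ I}, S.Wmin Jᶜ

/-- The `ℤ[Λ]^W`-submodule (as a set) `R_I := Σ_{v ∈ C^I} ℤ[Λ]^W ⬝ f_v ⊆ ℤ[Λ]`, where
`f_v := f_v^{Δ∖I}` for `v ∈ C^I`. -/
def RI [Finite W] (S : WeylSetup r Λ₀ W) (I : Finset (Fin r)) : Set (GA r Λ₀) :=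
  {x : GA r Λ₀ | ∃ c : {v : W // v ∈ S.CI I} →₀ S.inv (Set.univ : Set W),
      x = c.sum fun v a => (a : GA r Λ₀) * S.steinberg Iᶜ v.1}

lemma eL_mul (l l' : Lam r Λ₀) : eL l * eL l' = eL (l + l') := by
  simp [eL, AddMonoidAlgebra.single_mul_single]

lemma act_single (S : WeylSetup r Λ₀ W) (w : W) (l : Lam r Λ₀) :
    S.act w (eL l) = eL (Multiplicative.toAdd (S.ρ w) l) := by
  show AddMonoidAlgebra.mapDomain _ _ = _
  simp [eL, AddMonoidAlgebra.mapDomain_single]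

lemma act_act (S : WeylSetup r Λ₀ W) (w w' : W) (x : GA r Λ₀) :
    S.act w (S.act w' x) = S.act (w * w') x := by
  apply AddMonoidAlgebra.coeff_injective
  show Finsupp.mapDomain _ (Finsupp.mapDomain _ x.coeff) = Finsupp.mapDomain _ x.coeff
  rw [← Finsupp.mapDomain_comp]
  congr 1
  funext l
  show Multiplicative.toAdd (S.ρ w) (Multiplicative.toAdd (S.ρ w') l) = Multiplicative.toAdd (S.ρ (w * w')) l
  rw [map_mul]
  rfl

lemma act_one (S : WeylSetup r Λ₀ W) (x : GA r Λ₀) : S.act 1 x = x := by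
  apply AddMonoidAlgebra.coeff_injective
  show Finsupp.mapDomain _ x.coeff = x.coeff
  rw [show ⇑(Multiplicative.toAdd (S.ρ 1)).toAddMonoidHom = id by
    funext l
    show Multiplicative.toAdd (S.ρ 1) l = l
    rw [map_one]
    rfl, Finsupp.mapDomain_id]

lemma mem_inv_iff (S : WeylSetup r Λ₀ W) {H : Set W} {x : GA r Λ₀} :
    x ∈ S.inv H ↔ ∀ w ∈ H, S.act w x = x := Iff.rfl

lemma eL_zero : eL (0 : Lam r Λ₀) = 1 := AddMonoidAlgebra.one_def.symm

/-- Membership in the invariants of the subgroup generated by one involution `s`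
is equivalent to being fixed by `s`. -/
lemma mem_inv_closure_iff (S : WeylSetup r Λ₀ W) {s : W} (hs : s * s = 1)
    (x : GA r Λ₀) :
    x ∈ S.inv (Subgroup.closure {s} : Set W) ↔ S.act s x = x := by
  rw [S.mem_inv_iff]
  constructor
  · intro h
    exact h s (Subgroup.subset_closure rfl)
  · intro h w hw
    rw [SetLike.mem_coe] at hw
    induction hw using Subgroup.closure_induction with
    | mem g hg => rwa [Set.mem_singleton_iff.mp hg]
    | one => exact S.act_one x
    | mul g g' _ _ hg hg' => rw [← S.act_act, hg', hg]
    | inv g _ hg =>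
        conv_lhs => rw [← hg]
        rw [S.act_act, inv_mul_cancel, S.act_one]

/-- Regularity of `e^a - 1` for `a` with nonzero pairing in some coordinate:
if `e^a · x = x` then `x = 0`. -/
lemma eq_zero_of_translation_fixed {a : Lam r Λ₀} {j : Fin r} (ha : a.2 j ≠ 0)
    (x : GA r Λ₀) (hx : eL a * x = x) : x = 0 := by
  by_contra hx0
  obtain ⟨y, hy⟩ := Finsupp.support_nonempty_iff.mpr (AddMonoidAlgebra.coeff_eq_zero.not.mpr hx0)
  have key : ∀ n : ℕ, x.coeff (y + n • a) = x.coeff y := by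
    intro n
    induction n with
    | zero => simp
    | succ n ih =>
        have h1 := congrArg (fun f : GA r Λ₀ => f.coeff (y + (n + 1) • a)) hx
        simp only [eL, AddMonoidAlgebra.coeff_single_mul_apply, one_mul] at h1
        rw [← h1, show -a + (y + (n + 1) • a) = y + n • a by rw [succ_nsmul]; abel]
        exact ih
  have hinj : Function.Injective (fun n : ℕ => y + n • a) := by
    intro n m hnm
    have h2 : n • a = m • a := by simpa using hnm
    have h3 : n • (a.2 j) = m • (a.2 j) := by
      have := congrArg (fun l : Lam r Λ₀ =>
        ((Finsupp.applyAddHom j).comp (AddMonoidHom.snd Λ₀ (Fin r →₀ ℤ))) l) h2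
      simp only [map_nsmul] at this
      exact this
    have h4 : (n : ℤ) * a.2 j = (m : ℤ) * a.2 j := by
      simpa only [nsmul_eq_mul] using h3
    exact_mod_cast mul_right_cancel₀ ha h4
  have hmem : ∀ n : ℕ, (fun n : ℕ => y + n • a) n ∈ (x.coeff.support : Set (Lam r Λ₀)) := by
    intro n
    simp only [Finset.mem_coe, Finsupp.mem_support_iff]
    rw [key n]
    exact Finsupp.mem_support_iff.mp hy
  exact (Set.infinite_of_injective_forall_mem hinj hmem) x.coeff.support.finite_toSet

end WeylSetup

open WeylSetup in
/-- For each `i ∈ {1,…,r}`, the group algebra `ℤ[Λ]` decomposes as the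
internal direct sum `ℤ[Λ] = ℤ[Λ]^{⟨s_i⟩} ⊕ e^{ω_i} · ℤ[Λ]^{⟨s_i⟩}` of
`ℤ[Λ]^{⟨s_i⟩}`-submodules: every element of `ℤ[Λ]` is uniquely of the form
`a + e^{ω_i} b` with `a, b ∈ ℤ[Λ]^{⟨s_i⟩}`. -/
theorem stmt4 {r : ℕ} {Λ₀ W : Type} [AddCommGroup Λ₀] [Module.Free ℤ Λ₀]
    [Module.Finite ℤ Λ₀] [Group W] [Finite W]
    (S : WeylSetup r Λ₀ W) (i : Fin r) :
    ∀ x : GA r Λ₀,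
      ∃! p : (S.inv (Subgroup.closure {S.cs.simple i} : Set W)) ×
          (S.inv (Subgroup.closure {S.cs.simple i} : Set W)),
        x = (p.1 : GA r Λ₀) + eL (omega r Λ₀ i) * (p.2 : GA r Λ₀) := by
  intro x
  classical
  set s : W := S.cs.simple i with hs_def
  have hss : s * s = 1 := by rw [hs_def]; exact S.cs.simple_mul_simple_self i
  set ω : Lam r Λ₀ := omega r Λ₀ i with hω_def
  set t : GA r Λ₀ := eL ω with ht_def
  have hσ_eL : ∀ l : Lam r Λ₀, S.act s (eL l) = eL (l.1, l.2 - l.2 i • S.α i) := by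
    intro l
    rw [hs_def, S.act_single, S.ρ_simple]
  have hfix_eL : ∀ l : Lam r Λ₀, l.2 i = 0 → S.act s (eL l) = eL l := by
    intro l hl
    rw [hσ_eL l, hl, zero_smul, sub_zero]
  have hinvol : ∀ z : GA r Λ₀, S.act s (S.act s z) = z := by
    intro z
    rw [S.act_act, hss, S.act_one]
  set ω' : Lam r Λ₀ := ((0 : Λ₀), Finsupp.single i 1 - S.α i) with hω'_def
  have hσt : S.act s t = eL ω' := by
    rw [ht_def, hσ_eL, hω_def, hω'_def]
    congr 1
    simp [omega, Finsupp.single_eq_same]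
  set p : GA r Λ₀ := t + S.act s t with hp_def
  set c : GA r Λ₀ := t * S.act s t with hc_def
  have hFp : S.act s p = p := by
    rw [hp_def, map_add, hinvol t, add_comm]
  have hFc : S.act s c = c := by
    rw [hc_def, map_mul, hinvol t, mul_comm]
  have hcval : c = eL (ω + ω') := by rw [hc_def, hσt, ht_def, eL_mul]
  set cinv : GA r Λ₀ := eL (-(ω + ω')) with hcinv_def
  have hccinv : c * cinv = 1 := by
    rw [hcval, hcinv_def, eL_mul, add_neg_cancel, eL_zero]
  have hFcinv : S.act s cinv = cinv := by
    rw [hcinv_def]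
    apply hfix_eL
    rw [hω_def, hω'_def]
    simp [omega, Finsupp.single_eq_same, S.α_self i]
  have htt : t * t = p * t - c := by rw [hp_def, hc_def]; ring
  have htinv : eL (-ω) * t = 1 := by
    rw [ht_def, eL_mul, neg_add_cancel, eL_zero]
  have hεσ : eL (-ω) = cinv * S.act s t := by
    have h1 : (cinv * S.act s t) * t = 1 := by
      have : (cinv * S.act s t) * t = c * cinv := by rw [hc_def]; ring
      rw [this, hccinv]
    calc eL (-ω) = eL (-ω) * ((cinv * S.act s t) * t) := by rw [h1, mul_one]
      _ = (eL (-ω) * t) * (cinv * S.act s t) := by ring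
      _ = cinv * S.act s t := by rw [htinv, one_mul]
  have hσt_pt : S.act s t = p - t := by rw [hp_def]; ring
  -- multiplication by t and t⁻¹ preserves the decomposable elements
  have hNt : ∀ z a b : GA r Λ₀, S.act s a = a → S.act s b = b → z = a + t * b →
      ∃ a' b', S.act s a' = a' ∧ S.act s b' = b' ∧ t * z = a' + t * b' := by
    intro z a b Fa Fb hz
    refine ⟨-(c * b), a + p * b, ?_, ?_, ?_⟩
    · rw [map_neg, map_mul, hFc, Fb]
    · rw [map_add, map_mul, hFp, Fa, Fb]
    · have h2 : t * (a + t * b) = t * a + t * t * b := by ring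
      rw [hz, h2, htt]; ring
  have hNtinv : ∀ z a b : GA r Λ₀, S.act s a = a → S.act s b = b → z = a + t * b →
      ∃ a' b', S.act s a' = a' ∧ S.act s b' = b' ∧ eL (-ω) * z = a' + t * b' := by
    intro z a b Fa Fb hz
    refine ⟨cinv * p * a + b, -(cinv * a), ?_, ?_, ?_⟩
    · rw [map_add, map_mul, map_mul, hFcinv, hFp, Fa, Fb]
    · rw [map_neg, map_mul, hFcinv, Fa]
    · rw [hz, mul_add, ← mul_assoc, htinv, one_mul, hεσ, hσt_pt]; ring
  -- powers of e^ω are decomposable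
  have hNω : ∀ n : ℤ, ∃ a b : GA r Λ₀, S.act s a = a ∧ S.act s b = b ∧
      eL ((0:Λ₀), Finsupp.single i n) = a + t * b := by
    intro n
    induction n using Int.induction_on with
    | zero =>
        refine ⟨1, 0, map_one _, map_zero _, ?_⟩
        rw [Finsupp.single_zero, show ((0:Λ₀), (0 : Fin r →₀ ℤ)) = (0 : Lam r Λ₀) from rfl,
          eL_zero, mul_zero, add_zero]
    | succ n ih =>
        obtain ⟨a, b, Fa, Fb, h⟩ := ih
        obtain ⟨a', b', Fa', Fb', h'⟩ := hNt _ a b Fa Fb h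
        refine ⟨a', b', Fa', Fb', ?_⟩
        have hw : ((0:Λ₀), Finsupp.single i ((n:ℤ)+1)) = ω + ((0:Λ₀), Finsupp.single i (n:ℤ)) := by
          rw [hω_def]
          show _ = ((0:Λ₀), Finsupp.single i (1:ℤ)) + ((0:Λ₀), Finsupp.single i (n:ℤ))
          rw [Prod.mk_add_mk, zero_add, ← Finsupp.single_add, add_comm]
        rw [hw, ← eL_mul, ← ht_def, h']
    | pred n ih =>
        obtain ⟨a, b, Fa, Fb, h⟩ := ih
        obtain ⟨a', b', Fa', Fb', h'⟩ := hNtinv _ a b Fa Fb h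
        refine ⟨a', b', Fa', Fb', ?_⟩
        have hw : ((0:Λ₀), Finsupp.single i (-(n:ℤ)-1)) = -ω + ((0:Λ₀), Finsupp.single i (-(n:ℤ))) := by
          rw [hω_def]
          show _ = -((0:Λ₀), Finsupp.single i (1:ℤ)) + ((0:Λ₀), Finsupp.single i (-(n:ℤ)))
          rw [Prod.neg_mk, neg_zero, Prod.mk_add_mk, zero_add, ← Finsupp.single_neg,
            ← Finsupp.single_add, show (-1 + -(n:ℤ)) = -(n:ℤ)-1 by ring]
        rw [hw, ← eL_mul, h']
  -- every basis element e^l is decomposable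
  have hNeL : ∀ l : Lam r Λ₀, ∃ a b : GA r Λ₀, S.act s a = a ∧ S.act s b = b ∧
      eL l = a + t * b := by
    intro l
    obtain ⟨a, b, Fa, Fb, h⟩ := hNω (l.2 i)
    have hFμ : S.act s (eL (l.1, l.2 - Finsupp.single i (l.2 i))) =
        eL (l.1, l.2 - Finsupp.single i (l.2 i)) := by
      apply hfix_eL
      show (l.2 - Finsupp.single i (l.2 i)) i = 0
      simp
    have hl : eL l = eL (l.1, l.2 - Finsupp.single i (l.2 i)) *
        eL ((0:Λ₀), Finsupp.single i (l.2 i)) := by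
      rw [eL_mul]
      congr 1
      rw [Prod.mk_add_mk, add_zero, sub_add_cancel]
    refine ⟨eL (l.1, l.2 - Finsupp.single i (l.2 i)) * a,
      eL (l.1, l.2 - Finsupp.single i (l.2 i)) * b, ?_, ?_, ?_⟩
    · rw [map_mul, hFμ, Fa]
    · rw [map_mul, hFμ, Fb]
    · rw [hl, h]; ring
  -- every element is decomposable
  have hNall : ∀ z : GA r Λ₀, ∃ a b : GA r Λ₀,
      S.act s a = a ∧ S.act s b = b ∧ (z : GA r Λ₀) = a + t * b := by
    intro z
    induction z using AddMonoidAlgebra.induction with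
    | zero => exact ⟨0, 0, map_zero _, map_zero _, by rw [mul_zero, add_zero]⟩
    | single_add l v f hlf hv ih =>
        obtain ⟨a, b, Fa, Fb, h⟩ := ih
        obtain ⟨a', b', Fa', Fb', h'⟩ := hNeL l
        refine ⟨v • a' + a, v • b' + b, ?_, ?_, ?_⟩
        · rw [map_add, map_zsmul, Fa', Fa]
        · rw [map_add, map_zsmul, Fb', Fb]
        · have hsingle : AddMonoidAlgebra.single l v = v • eL l := by
            simp [eL, AddMonoidAlgebra.smul_single]
          show AddMonoidAlgebra.single l v + f = _
          rw [hsingle, h', h, smul_add, mul_add, mul_smul_comm]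
          abel
  -- uniqueness: regularity of e^α - 1
  have hreg : ∀ B : GA r Λ₀, t * B = S.act s t * B → B = 0 := by
    intro B hB
    have hω_split : ω' + ((0:Λ₀), S.α i) = ω := by
      rw [hω_def, hω'_def]
      show _ = ((0:Λ₀), Finsupp.single i (1:ℤ))
      rw [Prod.mk_add_mk, add_zero, sub_add_cancel]
    have h3 : ∀ X : GA r Λ₀, eL (-ω') * (eL ω' * X) = X := by
      intro X
      rw [← mul_assoc, eL_mul, neg_add_cancel, eL_zero, one_mul]
    have h2 : eL ω' * (eL ((0:Λ₀), S.α i) * B) = eL ω' * B := by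
      rw [← mul_assoc, eL_mul, hω_split, ← ht_def, hB, hσt]
    have h1 : eL ((0:Λ₀), S.α i) * B = B := by
      calc eL ((0:Λ₀), S.α i) * B
          = eL (-ω') * (eL ω' * (eL ((0:Λ₀), S.α i) * B)) := (h3 _).symm
        _ = eL (-ω') * (eL ω' * B) := by rw [h2]
        _ = B := h3 _
    exact WeylSetup.eq_zero_of_translation_fixed (j := i)
      (by show S.α i i ≠ 0; rw [S.α_self i]; norm_num) B h1
  have huniq : ∀ A B : GA r Λ₀, S.act s A = A → S.act s B = B → A + t * B = 0 →
      A = 0 ∧ B = 0 := by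
    intro A B FA FB h
    have h2 : A + S.act s t * B = 0 := by
      have h3 := congrArg (S.act s) h
      rwa [map_add, map_mul, FA, FB, map_zero] at h3
    have hB : t * B = S.act s t * B := add_left_cancel (h.trans h2.symm)
    have hB0 : B = 0 := hreg B hB
    refine ⟨?_, hB0⟩
    rwa [hB0, mul_zero, add_zero] at h
  -- assemble
  obtain ⟨a, b, Fa, Fb, hx⟩ := hNall x
  have memInv : ∀ z : GA r Λ₀, S.act s z = z →
      z ∈ S.inv (Subgroup.closure {s} : Set W) := fun z hz =>
    (S.mem_inv_closure_iff hss z).mpr hz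
  refine ⟨(⟨a, memInv a Fa⟩, ⟨b, memInv b Fb⟩), hx, ?_⟩
  rintro ⟨⟨a', ha'⟩, ⟨b', hb'⟩⟩ h
  have Fa' : S.act s a' = a' := (S.mem_inv_closure_iff hss a').mp ha'
  have Fb' : S.act s b' = b' := (S.mem_inv_closure_iff hss b').mp hb'
  have he : a' + t * b' = a + t * b := by
    have h' : x = a' + t * b' := h
    exact h'.symm.trans hx
  have h0 : (a' - a) + t * (b' - b) = 0 := by linear_combination he
  obtain ⟨hA, hB⟩ := huniq _ _ (by rw [map_sub, Fa', Fa]) (by rw [map_sub, Fb', Fb]) h0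
  have hA' : a' = a := sub_eq_zero.mp hA
  have hB' : b' = b := sub_eq_zero.mp hB
  exact Prod.ext (Subtype.ext hA') (Subtype.ext hB')
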